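/- Exact representation of the return-time tail. For every i ∈ {1,…,N} and every integer k ≥ 1: P̃(τ^i > k) = Ẽ[ (1 − p_N)^{| ∪_{n=1}^{k−1} 𝒱̃^n_{i→·} |} ], where Ẽ denotes expectation under P̃ and |·| denotes cardinality; moreover, on the event {τ^i > k} one has ∪_{n≤k−1} 𝒱^n_{i→·} = ∪_{n≤k−1} 𝒱̃^n_{i→·}. -/

import Mathlib

open MeasureTheory ProbabilityTheory
open scoped ENNReal

/-- The sets `𝒱^n_{i→·}` of neurons reachable from `i` in `n` steps along the directed
graph `W`: `reach W i 1 = {j : W_{i→j} = 1}` and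
`reach W i (n+1) = {j : ∃ k ∈ reach W i n, W_{k→j} = 1}` (with `reach W i 0 = {i}`). -/
def reach {N : ℕ} (W : Fin N → Fin N → Bool) (i : Fin N) : ℕ → Finset (Fin N)
  | 0 => {i}
  | n + 1 => Finset.univ.filter (fun j => ∃ k ∈ reach W i n, W k j = true)

/-- The sets `𝒱̃^n_{i→·}`: the same exploration as `reach`, but always excluding `i`. -/
def reachAvoid {N : ℕ} (W : Fin N → Fin N → Bool) (i : Fin N) : ℕ → Finset (Fin N)
  | 0 => {i}
  | n + 1 => Finset.univ.filter (fun j => j ≠ i ∧ ∃ k ∈ reachAvoid W i n, W k j = true)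

namespace ReturnTimeAux

variable {N : ℕ}

lemma mem_reach_succ {W : Fin N → Fin N → Bool} {i j : Fin N} {n : ℕ} :
    j ∈ reach W i (n+1) ↔ ∃ k ∈ reach W i n, W k j = true := by
  simp [reach]

lemma mem_reachAvoid_succ {W : Fin N → Fin N → Bool} {i j : Fin N} {n : ℕ} :
    j ∈ reachAvoid W i (n+1) ↔ j ≠ i ∧ ∃ k ∈ reachAvoid W i n, W k j = true := by
  simp [reachAvoid]

lemma ne_of_mem_reachAvoid {W : Fin N → Fin N → Bool} {i j : Fin N} {n : ℕ} (hn : 1 ≤ n)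
    (h : j ∈ reachAvoid W i n) : j ≠ i := by
  cases n with
  | zero => omega
  | succ m => exact (mem_reachAvoid_succ.1 h).1

lemma reach_eq_reachAvoid {W : Fin N → Fin N → Bool} {i : Fin N} {n : ℕ}
    (h : ∀ m, 1 ≤ m → m ≤ n → i ∉ reach W i m) :
    reach W i n = reachAvoid W i n := by
  induction n with
  | zero => rfl
  | succ m ih =>
    have hm := ih (fun l hl1 hl2 => h l hl1 (by omega))
    ext j
    rw [mem_reach_succ, mem_reachAvoid_succ, ← hm]
    constructor
    · intro hj
      refine ⟨?_, hj⟩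
      rintro rfl
      exact h (m+1) (by omega) le_rfl (mem_reach_succ.2 hj)
    · exact fun h => h.2

lemma reachAvoid_congr {W W' : Fin N → Fin N → Bool} {i : Fin N}
    (h : ∀ a b, b ≠ i → W a b = W' a b) (n : ℕ) :
    reachAvoid W i n = reachAvoid W' i n := by
  induction n with
  | zero => rfl
  | succ m ih =>
    ext j
    rw [mem_reachAvoid_succ, mem_reachAvoid_succ, ih]
    constructor
    · rintro ⟨hj, a, ha, hw⟩
      exact ⟨hj, a, ha, by rw [← h _ _ hj]; exact hw⟩
    · rintro ⟨hj, a, ha, hw⟩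
      exact ⟨hj, a, ha, by rw [h _ _ hj]; exact hw⟩

lemma no_return_of_no_edge {W : Fin N → Fin N → Bool} {i : Fin N}
    (hdiag : ∀ j, W j j = false) {k : ℕ} (hk : 1 ≤ k)
    (h : ∀ j ∈ (Finset.Icc 1 (k-1)).biUnion (fun n => reachAvoid W i n), W j i = false) :
    ∀ n, (n ≤ k - 1 → reach W i n = reachAvoid W i n) ∧ (1 ≤ n → n ≤ k → i ∉ reach W i n) := by
  intro n
  induction n with
  | zero => exact ⟨fun _ => rfl, fun h1 _ => absurd h1 (by omega)⟩
  | succ m ih =>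
    have hnotin : m + 1 ≤ k → i ∉ reach W i (m+1) := by
      intro hle hi
      obtain ⟨j, hj, hw⟩ := mem_reach_succ.1 hi
      rw [ih.1 (by omega)] at hj
      rcases Nat.eq_zero_or_pos m with rfl | hm
      · have : j = i := by simpa [reachAvoid] using hj
        subst this
        rw [hdiag j] at hw; exact Bool.false_ne_true hw
      · have := h j (Finset.mem_biUnion.2 ⟨m, Finset.mem_Icc.2 ⟨hm, by omega⟩, hj⟩)
        rw [this] at hw; exact Bool.false_ne_true hw
    refine ⟨?_, fun _ h2 => hnotin h2⟩
    intro hle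
    ext j
    rw [mem_reach_succ, mem_reachAvoid_succ, ← ih.1 (by omega)]
    constructor
    · intro hj
      refine ⟨?_, hj⟩
      rintro rfl
      exact hnotin (by omega) (mem_reach_succ.2 hj)
    · exact And.right

lemma event_iff {W : Fin N → Fin N → Bool} {i : Fin N} (hdiag : ∀ j, W j j = false)
    {k : ℕ} (hk : 1 ≤ k) :
    (∀ n, 1 ≤ n → n ≤ k → i ∉ reach W i n) ↔
      (∀ j ∈ (Finset.Icc 1 (k-1)).biUnion (fun n => reachAvoid W i n), W j i = false) := by
  constructor
  · intro h j hj
    obtain ⟨n, hn, hjn⟩ := Finset.mem_biUnion.1 hj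
    rw [Finset.mem_Icc] at hn
    by_contra hw
    have hw' : W j i = true := by
      cases hv : W j i with
      | false => exact absurd hv hw
      | true => rfl
    have hjr : j ∈ reach W i n := by
      rw [reach_eq_reachAvoid (fun m h1 h2 => h m h1 (by omega))]
      exact hjn
    exact h (n+1) (by omega) (by omega) (mem_reach_succ.2 ⟨j, hjr, hw'⟩)
  · intro h n h1 h2
    exact (no_return_of_no_edge hdiag hk h n).2 h1 h2

/-- projection killing column `i` and the diagonal -/
def proj (i : Fin N) (V : Fin N → Fin N → Bool) : Fin N → Fin N → Bool :=
  fun a b => if b = i ∨ a = b then false else V a b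

lemma proj_idem (i : Fin N) (V : Fin N → Fin N → Bool) : proj i (proj i V) = proj i V := by
  funext a b
  by_cases h : b = i ∨ a = b <;> simp [proj, h]

lemma proj_agree {i : Fin N} {V : Fin N → Fin N → Bool} (hdiag : ∀ j, V j j = false) :
    ∀ a b, b ≠ i → proj i V a b = V a b := by
  intro a b hb
  by_cases hab : a = b
  · subst hab; simp [proj, hdiag a]
  · simp [proj, hb, hab]

lemma reachAvoid_proj {i : Fin N} {V : Fin N → Fin N → Bool} (hdiag : ∀ j, V j j = false)
    (n : ℕ) : reachAvoid (proj i V) i n = reachAvoid V i n :=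
  reachAvoid_congr (fun a b hb => proj_agree hdiag a b hb) n

/-- the union `∪_{n=1}^{k-1} reachAvoid` -/
def Ufin (i : Fin N) (k : ℕ) (V : Fin N → Fin N → Bool) : Finset (Fin N) :=
  (Finset.Icc 1 (k-1)).biUnion (fun n => reachAvoid V i n)

end ReturnTimeAux

open ReturnTimeAux

/-- **Exact representation of the return-time tail.** For i.i.d. Bernoulli(`p_N`) weights,
`P̃(τ^i > k) = Ẽ[(1 - p_N)^{|∪_{n=1}^{k-1} 𝒱̃^n_{i→·}|}]`, and on `{τ^i > k}` one has
`∪_{n≤k-1} 𝒱^n_{i→·} = ∪_{n≤k-1} 𝒱̃^n_{i→·}`. -/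
theorem return_time_tail_representation
    {Ωt : Type*} [MeasurableSpace Ωt] (Pt : Measure Ωt) [IsProbabilityMeasure Pt]
    (N : ℕ) (hN : 0 < N) (ϑ : ℝ) (hϑ : 0 < ϑ)
    (W : Ωt → Fin N → Fin N → Bool)
    (hmeas : ∀ p : Fin N × Fin N, Measurable (fun ω => W ω p.1 p.2))
    (hdiag : ∀ ω j, W ω j j = false)
    (hber : ∀ i j : Fin N, i ≠ j →
      Pt {ω | W ω i j = true} = ENNReal.ofReal ((1 + ϑ / N) / N))
    (hindep : iIndepFun
      (fun (p : {p : Fin N × Fin N // p.1 ≠ p.2}) ω => W ω p.1.1 p.1.2) Pt)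
    (i : Fin N) (k : ℕ) (hk : 1 ≤ k) :
    (Pt {ω | ∀ n : ℕ, 1 ≤ n → n ≤ k → i ∉ reach (W ω) i n}).toReal
      = ∫ ω, (1 - (1 + ϑ / N) / N) ^
          (((Finset.Icc 1 (k-1)).biUnion (fun n => reachAvoid (W ω) i n)).card) ∂Pt ∧
    ∀ ω, (∀ n : ℕ, 1 ≤ n → n ≤ k → i ∉ reach (W ω) i n) →
      (Finset.Icc 1 (k-1)).biUnion (fun n => reach (W ω) i n)
        = (Finset.Icc 1 (k-1)).biUnion (fun n => reachAvoid (W ω) i n) := by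
  classical
  have part2 : ∀ ω, (∀ n : ℕ, 1 ≤ n → n ≤ k → i ∉ reach (W ω) i n) →
      (Finset.Icc 1 (k-1)).biUnion (fun n => reach (W ω) i n)
        = (Finset.Icc 1 (k-1)).biUnion (fun n => reachAvoid (W ω) i n) := by
    intro ω hω
    refine Finset.biUnion_congr rfl ?_
    intro n hn
    rw [Finset.mem_Icc] at hn
    exact reach_eq_reachAvoid (fun m h1 h2 => hω m h1 (by omega))
  refine ⟨?_, part2⟩
  set p : ℝ := (1 + ϑ / N) / N with hpdef
  have hp0 : 0 ≤ p := by positivity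
  have hUfin : ∀ V : Fin N → Fin N → Bool,
      (Finset.Icc 1 (k-1)).biUnion (fun n => reachAvoid V i n) = Ufin i k V := fun _ => rfl
  simp only [hUfin]
  set T : Set Ωt := {ω | ∀ n : ℕ, 1 ≤ n → n ≤ k → i ∉ reach (W ω) i n} with hTdef
  set A : (Fin N → Fin N → Bool) → Set Ωt := fun c => {ω | proj i (W ω) = c} with hAdef
  -- measurability machinery
  have hWmeas : Measurable (fun ω => W ω) :=
    measurable_pi_lambda _ fun a => measurable_pi_lambda _ fun b => hmeas (a, b)
  have hms : ∀ Φ : (Fin N → Fin N → Bool) → Prop, MeasurableSet {ω | Φ (W ω)} := by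
    intro Φ
    exact hWmeas ((Set.toFinite {V | Φ V}).measurableSet)
  have hUproj : ∀ ω, Ufin i k (proj i (W ω)) = Ufin i k (W ω) := by
    intro ω
    exact Finset.biUnion_congr rfl fun n _ => reachAvoid_proj (hdiag ω) n
  have hU_ne : ∀ c : Fin N → Fin N → Bool, ∀ j ∈ Ufin i k c, j ≠ i := by
    intro c j hj
    obtain ⟨n, hn, hjn⟩ := Finset.mem_biUnion.1 hj
    exact ne_of_mem_reachAvoid (Finset.mem_Icc.1 hn).1 hjn
  have hT : ∀ ω, ω ∈ T ↔ ∀ j ∈ Ufin i k (proj i (W ω)), W ω j i = false := by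
    intro ω
    rw [hUproj ω]
    exact event_iff (hdiag ω) hk
  -- independence
  have hind := iIndepFun_iff_measure_inter_preimage_eq_mul.mp hindep
  have hprod : ∀ (S : Finset {q : Fin N × Fin N // q.1 ≠ q.2})
      (v : {q : Fin N × Fin N // q.1 ≠ q.2} → Bool),
      Pt (⋂ q ∈ S, {ω | W ω q.1.1 q.1.2 = v q})
        = ∏ q ∈ S, Pt {ω | W ω q.1.1 q.1.2 = v q} := by
    intro S v
    exact hind S (sets := fun q => {v q}) (fun q _ => measurableSet_singleton _)
  have hTmeas : MeasurableSet T := hms (fun V => ∀ n : ℕ, 1 ≤ n → n ≤ k → i ∉ reach V i n)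
  have hAmeas : ∀ c, MeasurableSet (A c) := fun c => hms (fun V => proj i V = c)
  -- key per-configuration identity
  have key : ∀ c : Fin N → Fin N → Bool,
      (Pt (A c ∩ T)).toReal = (Pt (A c)).toReal * (1 - p) ^ (Ufin i k c).card := by
    intro c
    by_cases hc : proj i c = c
    · set s₁ : Finset {q : Fin N × Fin N // q.1 ≠ q.2} :=
        Finset.univ.filter (fun q => q.1.2 ≠ i) with hs₁
      set s₂ : Finset {q : Fin N × Fin N // q.1 ≠ q.2} :=
        Finset.univ.filter (fun q => q.1.2 = i ∧ q.1.1 ∈ Ufin i k c) with hs₂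
      have hdisj : Disjoint s₁ s₂ := by
        rw [Finset.disjoint_left]
        intro q hq1 hq2
        rw [hs₁, Finset.mem_filter] at hq1
        rw [hs₂, Finset.mem_filter] at hq2
        exact hq1.2 hq2.2.1
      have hcval : ∀ a b : Fin N, b = i ∨ a = b → c a b = false := by
        intro a b hab
        rw [← hc]; simp [proj, hab]
      have hA : A c = ⋂ q ∈ s₁, {ω | W ω q.1.1 q.1.2 = c q.1.1 q.1.2} := by
        ext ω
        simp only [hAdef, Set.mem_iInter, hs₁, Finset.mem_filter, Finset.mem_univ, true_and,
          Set.mem_setOf_eq]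
        constructor
        · intro hω q hq
          rw [← hω]
          exact (proj_agree (hdiag ω) _ _ hq).symm
        · intro hω
          funext a b
          by_cases hab : b = i ∨ a = b
          · rw [hcval a b hab]; simp [proj, hab]
          · push_neg at hab
            rw [proj_agree (hdiag ω) a b hab.1]
            exact hω ⟨(a, b), hab.2⟩ hab.1
      have hB : {ω | ∀ j ∈ Ufin i k c, W ω j i = false}
          = ⋂ q ∈ s₂, {ω | W ω q.1.1 q.1.2 = c q.1.1 q.1.2} := by
        ext ω
        simp only [Set.mem_iInter, hs₂, Finset.mem_filter, Finset.mem_univ, true_and,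
          Set.mem_setOf_eq]
        constructor
        · rintro hω q ⟨hqi, hqU⟩
          rw [hcval q.1.1 q.1.2 (Or.inl hqi), hqi]
          exact hω _ hqU
        · intro hω j hj
          have := hω ⟨(j, i), hU_ne c j hj⟩ ⟨rfl, hj⟩
          rwa [hcval j i (Or.inl rfl)] at this
      have hcap : (A c) ∩ T = ⋂ q ∈ s₁ ∪ s₂, {ω | W ω q.1.1 q.1.2 = c q.1.1 q.1.2} := by
        have h1 : (A c) ∩ T = (A c) ∩ {ω | ∀ j ∈ Ufin i k c, W ω j i = false} := by
          ext ω
          constructor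
          · rintro ⟨h1, h2⟩
            refine ⟨h1, ?_⟩
            have h3 := (hT ω).1 h2
            rwa [show proj i (W ω) = c from h1] at h3
          · rintro ⟨h1, h2⟩
            refine ⟨h1, (hT ω).2 ?_⟩
            rwa [show proj i (W ω) = c from h1]
        rw [h1, hA, hB]
        ext ω
        simp only [Set.mem_inter_iff, Set.mem_iInter, Finset.mem_union]
        constructor
        · rintro ⟨ha, hb⟩ q hq
          rcases hq with hq | hq
          exacts [ha q hq, hb q hq]
        · intro h
          exact ⟨fun q hq => h q (Or.inl hq), fun q hq => h q (Or.inr hq)⟩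
      have hPcap : Pt ((A c) ∩ T)
          = Pt (A c) * ∏ q ∈ s₂, Pt {ω | W ω q.1.1 q.1.2 = c q.1.1 q.1.2} := by
        rw [hcap, hprod, Finset.prod_union hdisj, hA, hprod]
      have hs₂val : ∀ q ∈ s₂,
          Pt {ω | W ω q.1.1 q.1.2 = c q.1.1 q.1.2} = 1 - ENNReal.ofReal p := by
        intro q hq
        rw [hs₂, Finset.mem_filter] at hq
        rw [hcval q.1.1 q.1.2 (Or.inl hq.2.1)]
        have hcompl : {ω | W ω q.1.1 q.1.2 = false} = {ω | W ω q.1.1 q.1.2 = true}ᶜ := by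
          ext ω; simp
        rw [hcompl, prob_compl_eq_one_sub (hms (fun V => V q.1.1 q.1.2 = true)),
          hber _ _ q.2]
      have hcard : s₂.card = (Ufin i k c).card := by
        refine Finset.card_bij' (fun q _ => q.1.1) (fun j hj => ⟨(j, i), hU_ne c j hj⟩)
          ?_ ?_ ?_ ?_
        · intro q hq; rw [hs₂, Finset.mem_filter] at hq; exact hq.2.2
        · intro j hj; rw [hs₂, Finset.mem_filter]; exact ⟨Finset.mem_univ _, rfl, hj⟩
        · intro q hq
          rw [hs₂, Finset.mem_filter] at hq
          apply Subtype.ext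
          exact Prod.ext rfl hq.2.1.symm
        · intro j hj; rfl
      rw [hPcap, Finset.prod_congr rfl hs₂val, Finset.prod_const, hcard,
        ENNReal.toReal_mul, ENNReal.toReal_pow]
      congr 1
      rcases Nat.eq_zero_or_pos (Ufin i k c).card with h0 | hpos
      · simp [h0]
      · obtain ⟨j, hj⟩ := Finset.card_pos.1 hpos
        have hp1 : p ≤ 1 := by
          have hb := hber j i (hU_ne c j hj)
          have hle : Pt {ω | W ω j i = true} ≤ 1 := prob_le_one
          rw [hb] at hle
          exact ENNReal.ofReal_le_one.1 hle
        congr 1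
        rw [show (1:ℝ≥0∞) - ENNReal.ofReal p = ENNReal.ofReal (1 - p) by
          rw [ENNReal.ofReal_sub 1 hp0, ENNReal.ofReal_one]]
        rw [ENNReal.toReal_ofReal (by linarith)]
    · have hAempty : A c = ∅ := by
        ext ω
        simp only [Set.mem_empty_iff_false, iff_false]
        intro hω
        have hω' : proj i (W ω) = c := hω
        apply hc
        rw [← hω']
        exact proj_idem i (W ω)
      simp [hAempty]
  -- decomposition of T
  have hcover : T = ⋃ c ∈ (Finset.univ : Finset (Fin N → Fin N → Bool)), (A c ∩ T) := by
    ext ω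
    simp only [Set.mem_iUnion, Finset.mem_univ]
    constructor
    · intro h
      exact ⟨proj i (W ω), trivial, rfl, h⟩
    · rintro ⟨c, -, -, h⟩
      exact h
  have hPT : Pt T = ∑ c : Fin N → Fin N → Bool, Pt (A c ∩ T) := by
    conv_lhs => rw [hcover]
    rw [measure_biUnion_finset ?_ (fun c _ => (hAmeas c).inter hTmeas)]
    intro c _ c' _ hcc
    apply Set.disjoint_left.2
    rintro ω ⟨h1, -⟩ ⟨h2, -⟩
    exact hcc ((show proj i (W ω) = c from h1).symm.trans (show proj i (W ω) = c' from h2))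
  -- integral computation
  have hintg : ∫ ω, (1 - p) ^ (Ufin i k (W ω)).card ∂Pt
      = ∑ c : Fin N → Fin N → Bool, (Pt (A c)).toReal * (1 - p) ^ (Ufin i k c).card := by
    have hpt : (fun ω => (1 - p) ^ (Ufin i k (W ω)).card)
        = fun ω => ∑ c : Fin N → Fin N → Bool,
            (A c).indicator (fun _ => (1 - p) ^ (Ufin i k c).card) ω := by
      funext ω
      rw [Finset.sum_eq_single (proj i (W ω))]
      · rw [Set.indicator_of_mem (show ω ∈ A (proj i (W ω)) from rfl), hUproj ω]
      · intro c _ hcne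
        exact Set.indicator_of_notMem
          (show ω ∉ A c from fun hmem => hcne ((show proj i (W ω) = c from hmem).symm)) _
      · intro h
        exact absurd (Finset.mem_univ _) h
    rw [hpt, integral_finset_sum]
    · refine Finset.sum_congr rfl fun c _ => ?_
      rw [integral_indicator_const _ (hAmeas c), smul_eq_mul, measureReal_def]
    · intro c _
      exact (integrable_const _).indicator (hAmeas c)
  rw [hPT, ENNReal.toReal_sum (fun c _ => measure_ne_top _ _), hintg]
  exact Finset.sum_congr rfl fun c _ => key c
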